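/- Let A ∈ ℝ^{d×d} be essentially non-negative and irreducible with Perron projection Π = u vᵀ. Then (1/t) ∫₀ᵗ e^{−s(A)u} e^{uA} du → Π as t → ∞. -/

import Mathlib

open scoped Matrix
open scoped Matrix.Norms.L2Operator

def Matrix.EssNonneg {d : ℕ} (A : Matrix (Fin d) (Fin d) ℝ) : Prop :=
  ∀ i j, i ≠ j → 0 ≤ A i j

def Matrix.Reducible {d : ℕ} (A : Matrix (Fin d) (Fin d) ℝ) : Prop :=
  ∃ (σ : Equiv.Perm (Fin d)) (r : ℕ), 1 ≤ r ∧ r ≤ d - 1 ∧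
    ∀ i j : Fin d, r ≤ (i : ℕ) → (j : ℕ) < r → A (σ i) (σ j) = 0

def Matrix.Irred {d : ℕ} (A : Matrix (Fin d) (Fin d) ℝ) : Prop := ¬ A.Reducible

noncomputable def Matrix.sMax {d : ℕ} (A : Matrix (Fin d) (Fin d) ℝ) : ℝ :=
  sSup (Complex.re '' spectrum ℂ (A.map Complex.ofReal))


open NormedSpace

namespace PerronAux


variable {d : ℕ}

/-- entry map as a CLM -/
noncomputable def entryCLM (i j : Fin d) : Matrix (Fin d) (Fin d) ℝ →L[ℝ] ℝ :=
  LinearMap.toContinuousLinearMap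
    { toFun := fun M => M i j, map_add' := fun _ _ => rfl, map_smul' := fun _ _ => rfl }

lemma exp_entry (M : Matrix (Fin d) (Fin d) ℝ) (i j : Fin d) :
    exp M i j = ∑' n : ℕ, ((n.factorial : ℝ)⁻¹) * (M ^ n) i j := by
  rw [exp_eq_tsum ℝ]
  have := (entryCLM i j).map_tsum (expSeries_summable' (𝕂 := ℝ) M)
  simp [entryCLM] at this
  exact this

lemma entry_summable (M : Matrix (Fin d) (Fin d) ℝ) (i j : Fin d) :
    Summable fun n : ℕ => ((n.factorial : ℝ)⁻¹) * (M ^ n) i j := by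
  have := ((expSeries_summable' (𝕂 := ℝ) M).map (entryCLM i j).toLinearMap.toAddMonoidHom
    (entryCLM i j).continuous)
  simp [entryCLM, Function.comp] at this
  exact this

lemma pow_entry_nonneg {M : Matrix (Fin d) (Fin d) ℝ} (hM : ∀ i j, 0 ≤ M i j) (n : ℕ) :
    ∀ i j, 0 ≤ (M ^ n) i j := by
  induction n with
  | zero => intro i j; rw [pow_zero, Matrix.one_apply]; positivity
  | succ n ih =>
    intro i j
    rw [pow_succ, Matrix.mul_apply]
    exact Finset.sum_nonneg fun k _ => mul_nonneg (ih i k) (hM k j)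

lemma exp_entry_nonneg {M : Matrix (Fin d) (Fin d) ℝ} (hM : ∀ i j, 0 ≤ M i j) (i j : Fin d) :
    0 ≤ exp M i j := by
  rw [exp_entry]
  exact tsum_nonneg fun n => mul_nonneg (by positivity) (pow_entry_nonneg hM n i j)

lemma exp_entry_ge {M : Matrix (Fin d) (Fin d) ℝ} (hM : ∀ i j, 0 ≤ M i j) (K : ℕ) (i j : Fin d) :
    ((K.factorial : ℝ)⁻¹) * (M ^ K) i j ≤ exp M i j := by
  rw [exp_entry]
  exact Summable.le_tsum (entry_summable M i j) K
    (fun n _ => mul_nonneg (by positivity) (pow_entry_nonneg hM n i j))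

/-- mulVec by a fixed vector, as a CLM in the matrix -/
noncomputable def mulVecCLM (u : Fin d → ℝ) : Matrix (Fin d) (Fin d) ℝ →L[ℝ] (Fin d → ℝ) :=
  LinearMap.toContinuousLinearMap
    { toFun := fun M => M *ᵥ u
      map_add' := fun M N => Matrix.add_mulVec M N u
      map_smul' := fun c M => (Matrix.smul_mulVec c M u) }

lemma exp_mulVec_eigen_zero {M : Matrix (Fin d) (Fin d) ℝ} {x : Fin d → ℝ}
    (h : M *ᵥ x = 0) : exp M *ᵥ x = x := by
  have hpow : ∀ n : ℕ, (M ^ (n + 1)) *ᵥ x = 0 := by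
    intro n
    induction n with
    | zero => simpa using h
    | succ n ih =>
      rw [pow_succ, ← Matrix.mulVec_mulVec, h, Matrix.mulVec_zero]
  have hmap := (mulVecCLM x).map_tsum (expSeries_summable' (𝕂 := ℝ) M)
  rw [exp_eq_tsum ℝ]
  have : (mulVecCLM x) (∑' n : ℕ, ((n.factorial : ℝ)⁻¹) • M ^ n)
      = ∑' n : ℕ, ((n.factorial : ℝ)⁻¹) • ((M ^ n) *ᵥ x) := by
    simpa [mulVecCLM, Matrix.smul_mulVec] using hmap
  have h2 : (∑' n : ℕ, ((n.factorial : ℝ)⁻¹) • ((M ^ n) *ᵥ x)) = x := by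
    rw [tsum_eq_single 0]
    · simp
    · intro n hn
      obtain ⟨m, rfl⟩ := Nat.exists_eq_succ_of_ne_zero hn
      rw [hpow m, smul_zero]
  calc (∑' n : ℕ, ((n.factorial : ℝ)⁻¹) • M ^ n) *ᵥ x
      = (mulVecCLM x) (∑' n : ℕ, ((n.factorial : ℝ)⁻¹) • M ^ n) := rfl
    _ = x := by rw [this, h2]

/-- right multiplication by a fixed matrix as CLM -/
noncomputable def mulRightCLM (C : Matrix (Fin d) (Fin d) ℝ) :
    Matrix (Fin d) (Fin d) ℝ →L[ℝ] Matrix (Fin d) (Fin d) ℝ :=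
  LinearMap.toContinuousLinearMap
    { toFun := fun M => M * C
      map_add' := fun M N => add_mul M N C
      map_smul' := fun c M => smul_mul_assoc c M C }

lemma exp_mul_eq_of_mul_eq_zero {M P : Matrix (Fin d) (Fin d) ℝ} (h : M * P = 0) :
    exp M * P = P := by
  have hpow : ∀ n : ℕ, (M ^ (n + 1)) * P = 0 := by
    intro n
    induction n with
    | zero => simpa using h
    | succ n ih => rw [pow_succ, mul_assoc, h, mul_zero]
  have hmap := (mulRightCLM P).map_tsum (expSeries_summable' (𝕂 := ℝ) M)
  rw [exp_eq_tsum ℝ]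
  have h1 : (mulRightCLM P) (∑' n : ℕ, ((n.factorial : ℝ)⁻¹) • M ^ n)
      = ∑' n : ℕ, ((n.factorial : ℝ)⁻¹) • ((M ^ n) * P) := by
    simpa [mulRightCLM, smul_mul_assoc] using hmap
  have h2 : (∑' n : ℕ, ((n.factorial : ℝ)⁻¹) • ((M ^ n) * P)) = P := by
    rw [tsum_eq_single 0]
    · simp
    · intro n hn
      obtain ⟨m, rfl⟩ := Nat.exists_eq_succ_of_ne_zero hn
      rw [hpow m, smul_zero]
  calc (∑' n : ℕ, ((n.factorial : ℝ)⁻¹) • M ^ n) * P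
      = (mulRightCLM P) (∑' n : ℕ, ((n.factorial : ℝ)⁻¹) • M ^ n) := rfl
    _ = P := by rw [h1, h2]


variable {d : ℕ}

lemma exp_smul_one (c : ℝ) :
    exp (c • (1 : Matrix (Fin d) (Fin d) ℝ)) = Real.exp c • 1 := by
  have h1 : c • (1 : Matrix (Fin d) (Fin d) ℝ) = algebraMap ℝ (Matrix (Fin d) (Fin d) ℝ) c :=
    (Algebra.algebraMap_eq_smul_one c).symm
  rw [h1, ← map_exp (algebraMap ℝ (Matrix (Fin d) (Fin d) ℝ))
    (continuous_algebraMap ℝ (Matrix (Fin d) (Fin d) ℝ)), ← Real.exp_eq_exp_ℝ,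
    Algebra.algebraMap_eq_smul_one]

lemma exp_shift (X : Matrix (Fin d) (Fin d) ℝ) (c r : ℝ) :
    exp (r • (X + c • (1 : Matrix (Fin d) (Fin d) ℝ)))
      = Real.exp (r * c) • exp (r • X) := by
  have hsplit : r • (X + c • (1 : Matrix (Fin d) (Fin d) ℝ))
      = r • X + (r * c) • (1 : Matrix (Fin d) (Fin d) ℝ) := by
    rw [smul_add, smul_smul]
  have hcomm : Commute (r • X) ((r * c) • (1 : Matrix (Fin d) (Fin d) ℝ)) :=
    ((Commute.one_right (r • X)).smul_right (r * c))
  rw [hsplit, Matrix.exp_add_of_commute _ _ hcomm, exp_smul_one, mul_smul_comm, mul_one]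


variable {d : ℕ}

lemma pow_entry_nonneg' {M : Matrix (Fin d) (Fin d) ℝ} (hM : ∀ i j, 0 ≤ M i j) (n : ℕ) :
    ∀ i j, 0 ≤ (M ^ n) i j := by
  induction n with
  | zero => intro i j; rw [pow_zero, Matrix.one_apply]; positivity
  | succ n ih =>
    intro i j
    rw [pow_succ, Matrix.mul_apply]
    exact Finset.sum_nonneg fun k _ => mul_nonneg (ih i k) (hM k j)

lemma pow_succ_entry_le {N : Matrix (Fin d) (Fin d) ℝ} (hN : ∀ i j, 0 ≤ N i j)
    (hdiag : ∀ i, 1 ≤ N i i) (k : ℕ) (i j : Fin d) :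
    (N ^ k) i j ≤ (N ^ (k + 1)) i j := by
  rw [pow_succ, Matrix.mul_apply]
  calc (N ^ k) i j = (N ^ k) i j * 1 := (mul_one _).symm
    _ ≤ (N ^ k) i j * N j j :=
        mul_le_mul_of_nonneg_left (hdiag j) (pow_entry_nonneg' hN k i j)
    _ ≤ ∑ l, (N ^ k) i l * N l j :=
        Finset.single_le_sum (f := fun l => (N ^ k) i l * N l j)
          (fun l _ => mul_nonneg (pow_entry_nonneg' hN k i l) (hN l j)) (Finset.mem_univ j)

lemma pow_entry_mono {N : Matrix (Fin d) (Fin d) ℝ} (hN : ∀ i j, 0 ≤ N i j)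
    (hdiag : ∀ i, 1 ≤ N i i) {k m : ℕ} (hkm : k ≤ m) (i j : Fin d) :
    (N ^ k) i j ≤ (N ^ m) i j := by
  induction m with
  | zero => simp_all
  | succ m ih =>
    rcases Nat.lt_or_ge k (m + 1) with h | h
    · exact (ih (Nat.lt_succ_iff.mp h)).trans (pow_succ_entry_le hN hdiag m i j)
    · have : k = m + 1 := le_antisymm hkm h
      subst this; rfl

lemma exists_pow_pos {N : Matrix (Fin d) (Fin d) ℝ} (hN : ∀ i j, 0 ≤ N i j)
    (hdiag : ∀ i, 1 ≤ N i i)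
    (hreach : ∀ i j : Fin d, Relation.ReflTransGen (fun a b => 0 < N a b) i j) :
    ∃ K : ℕ, ∀ i j, 0 < (N ^ K) i j := by
  have hstep : ∀ i j : Fin d, ∃ k : ℕ, 0 < (N ^ k) i j := by
    intro i j
    induction hreach i j with
    | refl => exact ⟨0, by simp [Matrix.one_apply]⟩
    | @tail b c hab hbc ih =>
      obtain ⟨k, hk⟩ := ih
      refine ⟨k + 1, ?_⟩
      rw [pow_succ, Matrix.mul_apply]
      calc (0:ℝ) < (N ^ k) i b * N b c := mul_pos hk hbc
        _ ≤ ∑ l, (N ^ k) i l * N l c :=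
          Finset.single_le_sum (f := fun l => (N ^ k) i l * N l c)
            (fun l _ => mul_nonneg (pow_entry_nonneg' hN k i l) (hN l c)) (Finset.mem_univ b)
  choose kf hkf using fun p : Fin d × Fin d => hstep p.1 p.2
  refine ⟨Finset.univ.sup kf, fun i j => ?_⟩
  exact lt_of_lt_of_le (hkf (i, j))
    (pow_entry_mono hN hdiag (Finset.le_sup (Finset.mem_univ (i, j))) i j)

lemma reach_of_irred {A N : Matrix (Fin d) (Fin d) ℝ} (hA : A.EssNonneg) (hirr : A.Irred)
    (hoff : ∀ i j, i ≠ j → (0 < N i j ↔ 0 < A i j)) :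
    ∀ i j : Fin d, Relation.ReflTransGen (fun a b => 0 < N a b) i j := by
  classical
  by_contra hcon
  push_neg at hcon
  obtain ⟨i₀, j₀, hnr⟩ := hcon
  set step : Fin d → Fin d → Prop := fun a b => 0 < N a b with hstep
  set S : Finset (Fin d) := Finset.univ.filter (fun j => Relation.ReflTransGen step i₀ j) with hS
  have hi₀ : i₀ ∈ S := by simp [hS, Relation.ReflTransGen.refl]
  have hj₀ : j₀ ∈ Sᶜ := by simp [hS, hnr]
  have hzero : ∀ p ∈ S, ∀ q, q ∉ S → A p q = 0 := by
    intro p hp q hq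
    have hpq : p ≠ q := by rintro rfl; exact hq hp
    have hnostep : ¬ step p q := by
      intro hs
      exact hq (by
        simp only [hS, Finset.mem_filter, Finset.mem_univ, true_and] at hp ⊢
        exact hp.tail hs)
    have : ¬ (0 < A p q) := fun h => hnostep ((hoff p q hpq).mpr h)
    exact le_antisymm (not_lt.mp this) (hA p q hpq)
  set r : ℕ := Sᶜ.card with hr
  have hcards : Sᶜ.card + S.card = d := by
    rw [Finset.card_compl, Fintype.card_fin]
    exact Nat.sub_add_cancel ((Finset.card_le_univ S).trans_eq (Finset.card_fin d))
  have hScard : S.card = d - r := by omega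
  -- build the permutation
  let e1 : Fin d ≃ Fin (Sᶜ.card + S.card) := finCongr hcards.symm
  let e2 : Fin (Sᶜ.card + S.card) ≃ Fin Sᶜ.card ⊕ Fin S.card := finSumFinEquiv.symm
  let e3 : Fin Sᶜ.card ⊕ Fin S.card ≃ {x : Fin d // ¬ x ∈ S} ⊕ {x : Fin d // x ∈ S} :=
    Equiv.sumCongr ((Sᶜ.orderIsoOfFin rfl).toEquiv.trans
      (Equiv.subtypeEquivRight (fun x => Finset.mem_compl)))
      (S.orderIsoOfFin rfl).toEquiv
  let e4 : {x : Fin d // ¬ x ∈ S} ⊕ {x : Fin d // x ∈ S} ≃ Fin d :=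
    (Equiv.sumComm _ _).trans (Equiv.sumCompl (· ∈ S))
  let σ : Equiv.Perm (Fin d) := (e1.trans e2).trans (e3.trans e4)
  have hσlt : ∀ j : Fin d, (j : ℕ) < r → σ j ∉ S := by
    intro j hj
    have h2 : e2 (e1 j) = Sum.inl ⟨(j : ℕ), hj⟩ := by
      have : e1 j = Fin.castAdd S.card ⟨(j : ℕ), hj⟩ := by
        apply Fin.ext; rfl
      rw [this]
      exact finSumFinEquiv_symm_apply_castAdd _
    show ((e1.trans e2).trans (e3.trans e4)) j ∉ S
    simp only [Equiv.trans_apply, h2]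
    simp only [e3, e4, Equiv.sumCongr_apply, Sum.map_inl, Equiv.trans_apply,
      Equiv.sumComm_apply, Sum.swap_inl, Equiv.sumCompl_apply_inr]
    exact ((Equiv.subtypeEquivRight (fun x => Finset.mem_compl))
      ((Sᶜ.orderIsoOfFin rfl).toEquiv ⟨(j : ℕ), hj⟩)).2
  have hσge : ∀ i : Fin d, r ≤ (i : ℕ) → σ i ∈ S := by
    intro i hi
    have hi2 : (i : ℕ) - r < S.card := by
      have : (i : ℕ) < d := i.2
      omega
    have h2 : e2 (e1 i) = Sum.inr ⟨(i : ℕ) - r, hi2⟩ := by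
      have : e1 i = Fin.natAdd Sᶜ.card ⟨(i : ℕ) - r, hi2⟩ := by
        apply Fin.ext
        show (i : ℕ) = Sᶜ.card + ((i : ℕ) - r)
        omega
      rw [this]
      exact finSumFinEquiv_symm_apply_natAdd _
    show ((e1.trans e2).trans (e3.trans e4)) i ∈ S
    simp only [Equiv.trans_apply, h2, e3, e4, Equiv.sumCongr_apply, Sum.map_inr,
      Equiv.sumComm_apply, Sum.swap_inr, Equiv.sumCompl_apply_inl]
    exact ((S.orderIsoOfFin rfl).toEquiv ⟨(i : ℕ) - r, hi2⟩).2
  apply hirr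
  refine ⟨σ, r, ?_, ?_, ?_⟩
  · have : Sᶜ.Nonempty := ⟨j₀, hj₀⟩
    have := Finset.card_pos.mpr this
    omega
  · have : S.Nonempty := ⟨i₀, hi₀⟩
    have := Finset.card_pos.mpr this
    omega
  · intro i j hi hj
    exact hzero (σ i) (hσge i hi) (σ j) (hσlt j hj)


variable {d : ℕ}

lemma norm_le_const_mul_of_entries (hd : 0 < d) (M : Matrix (Fin d) (Fin d) ℝ) {C : ℝ}
    (h : ∀ i j, |M i j| ≤ C) :
    ‖M‖ ≤ (∑ i : Fin d, ∑ j : Fin d, ‖(Matrix.single i j (1:ℝ))‖) * C := by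
  conv_lhs => rw [Matrix.matrix_eq_sum_single M]
  have hC : 0 ≤ C := (abs_nonneg _).trans (h ⟨0, hd⟩ ⟨0, hd⟩)
  calc ‖∑ i : Fin d, ∑ j : Fin d, Matrix.single i j (M i j)‖
      ≤ ∑ i : Fin d, ∑ j : Fin d, ‖Matrix.single i j (M i j)‖ := by
        refine (norm_sum_le _ _).trans (Finset.sum_le_sum fun i _ => norm_sum_le _ _)
    _ ≤ ∑ i : Fin d, ∑ j : Fin d, ‖Matrix.single i j (1:ℝ)‖ * C := by
        refine Finset.sum_le_sum fun i _ => Finset.sum_le_sum fun j _ => ?_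
        have : Matrix.single i j (M i j) = (M i j) • Matrix.single i j (1:ℝ) := by
          rw [Matrix.smul_single, smul_eq_mul, mul_one]
        rw [this, norm_smul, Real.norm_eq_abs, mul_comm]
        exact mul_le_mul_of_nonneg_left (h i j) (norm_nonneg _)
    _ = (∑ i : Fin d, ∑ j : Fin d, ‖Matrix.single i j (1:ℝ)‖) * C := by
        rw [Finset.sum_mul]
        exact Finset.sum_congr rfl fun i _ => (Finset.sum_mul _ _ _).symm


lemma exp_pos_entries {A B : Matrix (Fin d) (Fin d) ℝ} (hA : A.EssNonneg) (hirr : A.Irred)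
    (hoff : ∀ i j, i ≠ j → B i j = A i j) {t : ℝ} (ht : 0 < t) :
    ∀ i j, 0 < exp (t • B) i j := by
  set c : ℝ := 1 / t + ∑ k, |B k k| with hc
  set M : Matrix (Fin d) (Fin d) ℝ := t • (B + c • 1) with hM
  have hMoff : ∀ i j, i ≠ j → M i j = t * A i j := by
    intro i j hij
    simp [hM, Matrix.one_apply_ne hij, hoff i j hij, Matrix.smul_apply]
  have hsum_abs : ∀ i, |B i i| ≤ ∑ k, |B k k| :=
    fun i => Finset.single_le_sum (fun k _ => abs_nonneg (B k k)) (Finset.mem_univ i)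
  have hMdiag : ∀ i, 1 ≤ M i i := by
    intro i
    have : M i i = t * B i i + (1 + t * ∑ k, |B k k|) := by
      simp [hM, Matrix.smul_apply, Matrix.one_apply_eq, hc]
      field_simp
    rw [this]
    have h1 : t * B i i + t * |B i i| ≥ 0 := by
      have := neg_abs_le (B i i)
      nlinarith [abs_nonneg (B i i)]
    nlinarith [mul_le_mul_of_nonneg_left (hsum_abs i) (le_of_lt ht)]
  have hMnonneg : ∀ i j, 0 ≤ M i j := by
    intro i j
    rcases eq_or_ne i j with rfl | hij
    · linarith [hMdiag i]
    · rw [hMoff i j hij]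
      exact mul_nonneg ht.le (hA i j hij)
  have hreach := reach_of_irred hA hirr (N := M) (fun i j hij => by
    rw [hMoff i j hij]
    constructor
    · intro h
      by_contra h'
      push_neg at h'
      nlinarith
    · intro h; exact mul_pos ht h)
  obtain ⟨K, hK⟩ := exists_pow_pos hMnonneg hMdiag hreach
  have hexpM : ∀ i j, 0 < exp M i j := by
    intro i j
    calc (0:ℝ) < ((K.factorial : ℝ)⁻¹) * (M ^ K) i j := by
          have := hK i j
          have h2 : (0:ℝ) < (K.factorial : ℝ)⁻¹ := by positivity
          nlinarith
      _ ≤ exp M i j := exp_entry_ge hMnonneg K i j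
  have hshift : exp M = Real.exp (t * c) • exp (t • B) := exp_shift B c t
  intro i j
  have := hexpM i j
  rw [hshift] at this
  simp only [Matrix.smul_apply, smul_eq_mul] at this
  nlinarith [Real.exp_pos (t * c), this]

lemma exp_nonneg_entries {A B : Matrix (Fin d) (Fin d) ℝ} (hA : A.EssNonneg)
    (hoff : ∀ i j, i ≠ j → B i j = A i j) {t : ℝ} (ht : 0 ≤ t) :
    ∀ i j, 0 ≤ exp (t • B) i j := by
  set c : ℝ := ∑ k, |B k k| with hc
  set M : Matrix (Fin d) (Fin d) ℝ := t • (B + c • 1) with hM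
  have hMnonneg : ∀ i j, 0 ≤ M i j := by
    intro i j
    rcases eq_or_ne i j with rfl | hij
    · have h1 : |B i i| ≤ c :=
        Finset.single_le_sum (fun k _ => abs_nonneg (B k k)) (Finset.mem_univ i)
      have : M i i = t * (B i i + c) := by
        simp [hM, Matrix.smul_apply, Matrix.one_apply_eq]
        ring
      rw [this]
      have := neg_abs_le (B i i)
      nlinarith
    · have : M i j = t * A i j := by
        simp [hM, Matrix.one_apply_ne hij, hoff i j hij, Matrix.smul_apply]
      rw [this]
      exact mul_nonneg ht (hA i j hij)
  have hshift : exp M = Real.exp (t * c) • exp (t • B) := exp_shift B c t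
  intro i j
  have h1 : 0 ≤ exp M i j := exp_entry_nonneg hMnonneg i j
  rw [hshift] at h1
  simp only [Matrix.smul_apply, smul_eq_mul] at h1
  nlinarith [Real.exp_pos (t * c)]


lemma ker_eq_span_aux {P : Matrix (Fin d) (Fin d) ℝ} {u : Fin d → ℝ} (hd : 0 < d)
    (hu : ∀ i, 0 < u i) (hpos : ∀ i j, 0 < P i j)
    (hPu : P *ᵥ u = u) {x : Fin d → ℝ} (hPx : P *ᵥ x = x) :
    ∃ α : ℝ, x = α • u := by
  obtain ⟨i₀, -, hmin⟩ := Finset.exists_min_image Finset.univ (fun i => x i / u i)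
    ⟨⟨0, hd⟩, Finset.mem_univ _⟩
  set α : ℝ := x i₀ / u i₀ with hα
  set y : Fin d → ℝ := x - α • u with hy
  have hy0 : ∀ i, 0 ≤ y i := by
    intro i
    have h1 : α ≤ x i / u i := hmin i (Finset.mem_univ i)
    have h2 : α * u i ≤ x i := (le_div_iff₀ (hu i)).mp h1
    simp only [hy, Pi.sub_apply, Pi.smul_apply, smul_eq_mul]
    linarith
  have hyi₀ : y i₀ = 0 := by
    simp only [hy, Pi.sub_apply, Pi.smul_apply, smul_eq_mul, hα]
    rw [div_mul_cancel₀ _ (ne_of_gt (hu i₀))]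
    ring
  have hPy : P *ᵥ y = y := by
    rw [hy, Matrix.mulVec_sub, hPx, Matrix.mulVec_smul, hPu]
  have hyzero : ∀ j, y j = 0 := by
    by_contra hcon
    push_neg at hcon
    obtain ⟨j, hj⟩ := hcon
    have hjpos : 0 < y j := lt_of_le_of_ne (hy0 j) (Ne.symm hj)
    have hlt : 0 < (P *ᵥ y) i₀ := by
      show 0 < ∑ l, P i₀ l * y l
      calc (0:ℝ) < P i₀ j * y j := mul_pos (hpos i₀ j) hjpos
        _ ≤ ∑ l, P i₀ l * y l :=
          Finset.single_le_sum (f := fun l => P i₀ l * y l)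
            (fun l _ => mul_nonneg (hpos i₀ l).le (hy0 l)) (Finset.mem_univ j)
    rw [hPy, hyi₀] at hlt
    exact lt_irrefl 0 hlt
  refine ⟨α, ?_⟩
  funext i
  have := hyzero i
  simp only [hy, Pi.sub_apply, Pi.smul_apply, smul_eq_mul, sub_eq_zero] at this
  simpa using this

lemma exists_preimage {B : Matrix (Fin d) (Fin d) ℝ} {u v : Fin d → ℝ} (hd : 0 < d)
    (hu0 : u ≠ 0) (hker : ∀ x, B *ᵥ x = 0 → ∃ α : ℝ, x = α • u) (hBu : B *ᵥ u = 0)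
    (hvB : ∀ x, v ⬝ᵥ (B *ᵥ x) = 0) (hvu : v ⬝ᵥ u = 1) :
    ∀ w : Fin d → ℝ, v ⬝ᵥ w = 0 → ∃ x, B *ᵥ x = w := by
  classical
  set f : (Fin d → ℝ) →ₗ[ℝ] (Fin d → ℝ) := Matrix.mulVecLin B with hf
  set g : (Fin d → ℝ) →ₗ[ℝ] ℝ :=
    { toFun := fun x => v ⬝ᵥ x
      map_add' := fun a b => dotProduct_add v a b
      map_smul' := fun c a => dotProduct_smul c v a } with hg
  have hker_eq : LinearMap.ker f = Submodule.span ℝ {u} := by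
    apply le_antisymm
    · intro x hx
      obtain ⟨α, rfl⟩ := hker x (by simpa [hf] using hx)
      exact Submodule.smul_mem _ _ (Submodule.mem_span_singleton_self u)
    · rw [Submodule.span_singleton_le_iff_mem]
      simpa [hf, LinearMap.mem_ker] using hBu
  have hrange_le : LinearMap.range f ≤ LinearMap.ker g := by
    rintro - ⟨x, rfl⟩
    simpa [hf, hg] using hvB x
  have hgsurj : Function.Surjective g := by
    intro c
    exact ⟨c • u, by simp [hg, dotProduct_smul, hvu]⟩
  have hfinrank_ker_g : Module.finrank ℝ (LinearMap.ker g) = d - 1 := by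
    have h1 := LinearMap.finrank_range_add_finrank_ker g
    rw [LinearMap.range_eq_top.mpr hgsurj] at h1
    simp only [finrank_top, Module.finrank_self] at h1
    have h2 : Module.finrank ℝ (Fin d → ℝ) = d := by simp
    omega
  have hfinrank_range : Module.finrank ℝ (LinearMap.range f) = d - 1 := by
    have h1 := LinearMap.finrank_range_add_finrank_ker f
    rw [hker_eq, finrank_span_singleton hu0] at h1
    have h2 : Module.finrank ℝ (Fin d → ℝ) = d := by simp
    omega
  have hrange_eq : LinearMap.range f = LinearMap.ker g :=
    Submodule.eq_of_le_of_finrank_eq hrange_le (by rw [hfinrank_range, hfinrank_ker_g])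
  intro w hw
  have : w ∈ LinearMap.ker g := by simpa [hg] using hw
  rw [← hrange_eq] at this
  obtain ⟨x, hx⟩ := this
  exact ⟨x, by simpa [hf] using hx⟩


end PerronAux
open PerronAux in
/-- For `A` essentially non-negative and irreducible with Perron projection `Π = u vᵀ`,
the Cesàro averages `(1/t) ∫₀ᵗ e^{-s(A)r} e^{rA} dr` converge to `Π` as `t → ∞`. -/
theorem cesaro_exp_tendsto_perron_projection {d : ℕ} (hd : 0 < d)
    (A : Matrix (Fin d) (Fin d) ℝ) (hA : A.EssNonneg) (hirr : A.Irred)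
    (u v : Fin d → ℝ) (hu : ∀ i, 0 < u i) (hv : ∀ i, 0 < v i)
    (hAu : A.mulVec u = A.sMax • u) (hAv : A.vecMul v = A.sMax • v)
    (huv : u ⬝ᵥ v = 1) :
    Filter.Tendsto
      (fun t : ℝ =>
        (1 / t) • ∫ r in (0:ℝ)..t, Real.exp (-(A.sMax) * r) • NormedSpace.exp (r • A))
      Filter.atTop (nhds (Matrix.vecMulVec u v)) := by
  classical
  set s : ℝ := A.sMax with hs
  set B : Matrix (Fin d) (Fin d) ℝ := A - s • 1 with hB
  have hoff : ∀ i j, i ≠ j → B i j = A i j := by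
    intro i j hij
    simp [hB, Matrix.sub_apply, Matrix.smul_apply, Matrix.one_apply_ne hij]
  have hBu : B *ᵥ u = 0 := by
    rw [hB, Matrix.sub_mulVec, hAu, Matrix.smul_mulVec, Matrix.one_mulVec, sub_self]
  have hvB : ∀ x, v ⬝ᵥ (B *ᵥ x) = 0 := by
    intro x
    rw [Matrix.dotProduct_mulVec]
    have hv0 : Matrix.vecMul v B = 0 := by
      funext i
      rw [hB, Matrix.vecMul_sub, hAv]
      have : (v ᵥ* (s • 1)) i = s * v i := by
        simp [Matrix.vecMul, dotProduct, Matrix.one_apply, mul_comm]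
      simp only [Pi.sub_apply, Pi.zero_apply, this, Pi.smul_apply, smul_eq_mul]
      ring
    rw [hv0, zero_dotProduct]
  have hint : ∀ r : ℝ, Real.exp (-s * r) • exp (r • A) = exp (r • B) := by
    intro r
    have hAeq : A = B + s • 1 := by rw [hB, sub_add_cancel]
    have := exp_shift (d := d) B s r
    rw [← hAeq] at this
    rw [this, smul_smul, ← Real.exp_add]
    have : -s * r + r * s = 0 := by ring
    rw [this, Real.exp_zero, one_smul]
  set Pim : Matrix (Fin d) (Fin d) ℝ := Matrix.vecMulVec u v with hPim
  have hBPim : B * Pim = 0 := by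
    ext i j
    rw [Matrix.mul_apply]
    simp only [hPim, Matrix.vecMulVec_apply, Matrix.zero_apply]
    have : ∑ k, B i k * (u k * v j) = (∑ k, B i k * u k) * v j := by
      rw [Finset.sum_mul]; exact Finset.sum_congr rfl fun k _ => by ring
    rw [this]
    have : (∑ k, B i k * u k) = (B *ᵥ u) i := rfl
    rw [this, hBu]
    simp
  have hexpPim : ∀ r : ℝ, exp (r • B) * Pim = Pim := by
    intro r
    exact exp_mul_eq_of_mul_eq_zero (by rw [Matrix.smul_mul, hBPim, smul_zero])
  -- kernel simplicity
  have hvu : v ⬝ᵥ u = 1 := by rw [dotProduct_comm]; exact huv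
  have hu0 : u ≠ 0 := by
    intro h
    have := hu ⟨0, hd⟩
    rw [h] at this
    exact lt_irrefl 0 this
  have hpos := exp_pos_entries (A := A) (B := B) hA hirr hoff one_pos
  have hPu : exp ((1:ℝ) • B) *ᵥ u = u :=
    exp_mulVec_eigen_zero (by rw [one_smul, hBu])
  have hker : ∀ x, B *ᵥ x = 0 → ∃ α : ℝ, x = α • u := by
    intro x hx
    exact ker_eq_span_aux hd hu hpos hPu (exp_mulVec_eigen_zero (by rw [one_smul, hx]))
  have hpre := exists_preimage hd hu0 hker hBu hvB hvu
  have hcolw : ∀ j, v ⬝ᵥ (fun i => (1 - Pim) i j) = 0 := by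
    intro j
    show (∑ i, v i * ((1 - Pim) i j)) = 0
    have : ∀ i, v i * ((1 - Pim) i j)
        = v i * (1 : Matrix (Fin d) (Fin d) ℝ) i j - (v i * u i) * v j := by
      intro i
      simp only [Matrix.sub_apply, hPim, Matrix.vecMulVec_apply]
      ring
    rw [Finset.sum_congr rfl fun i _ => this i, Finset.sum_sub_distrib]
    have h1 : (∑ i, v i * (1 : Matrix (Fin d) (Fin d) ℝ) i j) = v j := by
      simp [Matrix.one_apply]
    have h2 : (∑ i, (v i * u i) * v j) = (v ⬝ᵥ u) * v j := by
      rw [← Finset.sum_mul]; rfl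
    rw [h1, h2, hvu, one_mul, sub_self]
  choose cvec hcvec using fun j => hpre (fun i => (1 - Pim) i j) (hcolw j)
  set C : Matrix (Fin d) (Fin d) ℝ := Matrix.of (fun i j => cvec j i) with hC
  have hBC : B * C = 1 - Pim := by
    ext i j
    rw [Matrix.mul_apply]
    have : (∑ k, B i k * C k j) = (B *ᵥ cvec j) i := rfl
    rw [this, hcvec j]
  have hdecomp : ∀ r : ℝ, exp (r • B) = Pim + (exp (r • B) * B) * C := by
    intro r
    calc exp (r • B) = exp (r • B) * (Pim + (1 - Pim)) := by
          rw [add_sub_cancel, mul_one]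
      _ = exp (r • B) * Pim + exp (r • B) * (1 - Pim) := mul_add _ _ _
      _ = Pim + (exp (r • B) * B) * C := by rw [hexpPim, ← hBC, ← mul_assoc]
  -- boundedness
  set umin : ℝ := Finset.univ.inf' ⟨⟨0, hd⟩, Finset.mem_univ _⟩ u with humin
  have huminpos : 0 < umin := by
    obtain ⟨i, -, hi⟩ := Finset.exists_mem_eq_inf' ⟨⟨0, hd⟩, Finset.mem_univ _⟩ u
    rw [humin, hi]
    exact hu i
  have huminle : ∀ i, umin ≤ u i := fun i => Finset.inf'_le u (Finset.mem_univ i)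
  have husum : ∀ i, u i ≤ ∑ k, u k :=
    fun i => Finset.single_le_sum (fun k _ => (hu k).le) (Finset.mem_univ i)
  set Cb : ℝ := (∑ k, u k) / umin with hCb
  have hentry : ∀ r : ℝ, 0 ≤ r → ∀ i j, |exp (r • B) i j| ≤ Cb := by
    intro r hr i j
    have h0 := exp_nonneg_entries (A := A) (B := B) hA hoff hr
    have heu : exp (r • B) *ᵥ u = u :=
      exp_mulVec_eigen_zero (by rw [Matrix.smul_mulVec, hBu, smul_zero])
    have hle : exp (r • B) i j * u j ≤ u i := by
      have : (∑ k, exp (r • B) i k * u k) = u i := by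
        have : (∑ k, exp (r • B) i k * u k) = (exp (r • B) *ᵥ u) i := rfl
        rw [this, heu]
      rw [← this]
      exact Finset.single_le_sum (f := fun k => exp (r • B) i k * u k)
        (fun k _ => mul_nonneg (h0 i k) (hu k).le) (Finset.mem_univ j)
    rw [abs_of_nonneg (h0 i j)]
    calc exp (r • B) i j ≤ u i / u j := (le_div_iff₀ (hu j)).mpr hle
      _ ≤ Cb := div_le_div₀ (Finset.sum_nonneg fun k _ => (hu k).le) (husum i) huminpos
        (huminle j)
  set cE : ℝ := ∑ i : Fin d, ∑ j : Fin d, ‖(Matrix.single i j (1:ℝ))‖ with hcE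
  have hbound : ∀ r : ℝ, 0 ≤ r → ‖exp (r • B)‖ ≤ cE * Cb := by
    intro r hr
    exact norm_le_const_mul_of_entries hd _ (hentry r hr)
  -- FTC
  have hcont : Continuous fun r : ℝ => exp (r • B) :=
    continuous_iff_continuousAt.2 fun r => (hasDerivAt_exp_smul_const B r).continuousAt
  have hcontB : Continuous fun r : ℝ => exp (r • B) * B :=
    hcont.mul continuous_const
  have hftc : ∀ t : ℝ, (∫ r in (0:ℝ)..t, exp (r • B) * B) = exp (t • B) - 1 := by
    intro t
    have := intervalIntegral.integral_eq_sub_of_hasDerivAt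
      (f := fun r : ℝ => exp (r • B)) (f' := fun r : ℝ => exp (r • B) * B)
      (fun r _ => hasDerivAt_exp_smul_const B r)
      (hcontB.intervalIntegrable 0 t)
    rw [this]
    simp
  have hint2 : ∀ t : ℝ, (∫ r in (0:ℝ)..t, exp (r • B))
      = (t - 0) • Pim + (exp (t • B) - 1) * C := by
    intro t
    have h1 : (∫ r in (0:ℝ)..t, exp (r • B))
        = ∫ r in (0:ℝ)..t, (Pim + (exp (r • B) * B) * C) :=
      intervalIntegral.integral_congr (fun r _ => hdecomp r)
    rw [h1, intervalIntegral.integral_add (f := fun _ => Pim) (g := fun r => exp (r • B) * B * C)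
      (intervalIntegrable_const)
      ((hcontB.mul continuous_const).intervalIntegrable 0 t :
        IntervalIntegrable (fun r => exp (r • B) * B * C) MeasureTheory.volume 0 t),
      intervalIntegral.integral_const]
    congr 1
    have h2 : (∫ r in (0:ℝ)..t, (exp (r • B) * B) * C)
        = ∫ r in (0:ℝ)..t, (mulRightCLM C) (exp (r • B) * B) := rfl
    rw [h2, (mulRightCLM C).intervalIntegral_comp_comm (hcontB.intervalIntegrable 0 t),
      hftc t]
    rfl
  have hfun : ∀ t : ℝ,
      (1 / t) • ∫ r in (0:ℝ)..t, Real.exp (-s * r) • exp (r • A)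
        = (1 / t) • ((t - 0) • Pim + (exp (t • B) - 1) * C) := by
    intro t
    rw [intervalIntegral.integral_congr (g := fun r => exp (r • B)) (fun r _ => hint r),
      hint2 t]
  have hg0 : Filter.Tendsto (fun t : ℝ => (1 / t) • ((exp (t • B) - 1) * C))
      Filter.atTop (nhds 0) := by
    apply squeeze_zero_norm' (a := fun t : ℝ => (1 / t) * ((cE * Cb + ‖(1 : Matrix (Fin d) (Fin d) ℝ)‖) * ‖C‖))
    · filter_upwards [Filter.eventually_ge_atTop (0:ℝ)] with t ht
      rw [norm_smul, Real.norm_eq_abs, abs_of_nonneg (by positivity)]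
      apply mul_le_mul_of_nonneg_left _ (by positivity)
      calc ‖(exp (t • B) - 1) * C‖ ≤ ‖exp (t • B) - 1‖ * ‖C‖ := norm_mul_le _ _
        _ ≤ (cE * Cb + ‖(1 : Matrix (Fin d) (Fin d) ℝ)‖) * ‖C‖ := by
            apply mul_le_mul_of_nonneg_right _ (norm_nonneg _)
            calc ‖exp (t • B) - 1‖ ≤ ‖exp (t • B)‖ + ‖(1 : Matrix (Fin d) (Fin d) ℝ)‖ :=
                norm_sub_le _ _
              _ ≤ cE * Cb + ‖(1 : Matrix (Fin d) (Fin d) ℝ)‖ := by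
                  linarith [hbound t ht]
    · have h1 : Filter.Tendsto (fun t : ℝ => (1 / t)) Filter.atTop (nhds 0) := by
        simpa using tendsto_inv_atTop_zero
      simpa using h1.mul_const ((cE * Cb + ‖(1 : Matrix (Fin d) (Fin d) ℝ)‖) * ‖C‖)
  have hmain : Filter.Tendsto
      (fun t : ℝ => Pim + (1 / t) • ((exp (t • B) - 1) * C)) Filter.atTop (nhds Pim) := by
    have := (tendsto_const_nhds (x := Pim) (f := Filter.atTop (α := ℝ))).add hg0
    simpa using this
  have heq : (fun t : ℝ => Pim + (1 / t) • ((exp (t • B) - 1) * C))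
      =ᶠ[Filter.atTop] (fun t : ℝ =>
        (1 / t) • ∫ r in (0:ℝ)..t, Real.exp (-s * r) • exp (r • A)) := by
    filter_upwards [Filter.eventually_gt_atTop (0:ℝ)] with t ht
    rw [hfun t, smul_add, sub_zero, smul_smul]
    have : (1 / t) * t = 1 := by field_simp
    rw [this, one_smul]
  exact hmain.congr' heq
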